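/- If L ⊆ Σ* is a nonempty commutative regular language with a product-form minimal automaton, then there is at most one letter x ∈ Σ such that the projection π_{{x}}(L) is a finite set. Consequently, for Γ ⊆ Σ with |Γ| ≥ 2, the projection π_Γ(L) is infinite; in particular no nonempty finite language over an at least binary alphabet has a product-form minimal automaton. -/

import Mathlib

/-- The Nerode right-congruence of a language `L`: `u ≡_L v` iff
for all words `x`, `u ++ x ∈ L ↔ v ++ x ∈ L`. -/
def NerodeEq {α : Type*} (L : Set (List α)) (u v : List α) : Prop :=
  ∀ x : List α, u ++ x ∈ L ↔ v ++ x ∈ L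

/-- The Nerode right-congruence as a setoid on words. -/
def nerodeSetoid {α : Type*} (L : Set (List α)) : Setoid (List α) where
  r := NerodeEq L
  iseqv := ⟨fun _ _ => Iff.rfl, fun h x => (h x).symm, fun h1 h2 x => (h1 x).trans (h2 x)⟩

/-- A language is regular iff its Nerode right-congruence has finitely many classes. -/
def RegularLang {α : Type*} (L : Set (List α)) : Prop :=
  Finite (Quotient (nerodeSetoid L))

/-- The state complexity of `L`: the number of Nerode right-congruence classes. -/
noncomputable def sc {α : Type*} (L : Set (List α)) : ℕ :=
  Nat.card (Quotient (nerodeSetoid L))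

/-- A language is commutative if membership only depends on the number of
occurrences of each letter. -/
def CommutativeLang {α : Type*} [DecidableEq α] (L : Set (List α)) : Prop :=
  ∀ u v : List α, (∀ x : α, u.count x = v.count x) → (u ∈ L ↔ v ∈ L)

/-- A (commutative) language has a product-form minimal automaton iff for all words
`u, v`: `u ≡_L v` holds if and only if `x^{|u|_x} ≡_L x^{|v|_x}` for every letter `x`. -/
def HasProductForm {α : Type*} [DecidableEq α] (L : Set (List α)) : Prop :=
  ∀ u v : List α,
    NerodeEq L u v ↔
      ∀ x : α, NerodeEq L (List.replicate (u.count x) x) (List.replicate (v.count x) x)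

lemma count_eq_filter_len {α : Type*} [DecidableEq α] (w : List α) (x : α) :
    w.count x = (w.filter (fun z => z = x)).length := by
  have h : (fun z : α => decide (z = x)) = (fun z : α => z == x) := rfl
  rw [List.count, List.countP_eq_length_filter, ← h]

lemma bound_of_finite {α : Type*} [DecidableEq α] (L : Set (List α)) (x : α)
    (h : ((fun w : List α => w.filter (fun z => z = x)) '' L).Finite) :
    ∃ N : ℕ, ∀ w ∈ L, w.count x ≤ N := by
  obtain ⟨N, hN⟩ := (h.image List.length).bddAbove
  refine ⟨N, fun w hw => ?_⟩
  have hm : (w.filter (fun z => z = x)).length ∈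
      (List.length '' ((fun w : List α => w.filter (fun z => z = x)) '' L)) :=
    ⟨_, ⟨w, hw, rfl⟩, rfl⟩
  have := hN hm
  rw [count_eq_filter_len]
  exact this

/-- Core lemma: two distinct letters with bounded counts give a contradiction. -/
lemma core {α : Type*} [DecidableEq α] (L : Set (List α)) (hne : L.Nonempty)
    (hp : HasProductForm L) (x y : α) (hxy : x ≠ y)
    (Nx Ny : ℕ) (hNx : ∀ w ∈ L, w.count x ≤ Nx) (hNy : ∀ w ∈ L, w.count y ≤ Ny) :
    False := by
  obtain ⟨w, hw⟩ := hne
  set u : List α := List.replicate (Nx + 1) x with hu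
  set v : List α := List.replicate (Ny + 1) y with hv
  have huv : NerodeEq L u v := by
    intro s
    constructor
    · intro hs
      exfalso
      have := hNx _ hs
      rw [List.count_append] at this
      simp [hu, List.count_replicate_self] at this
      omega
    · intro hs
      exfalso
      have := hNy _ hs
      rw [List.count_append] at this
      simp [hv, List.count_replicate_self] at this
      omega
  have h1 := (hp u v).mp huv x
  have hucx : u.count x = Nx + 1 := by simp [hu]
  have hvcx : v.count x = 0 := by simp [hv, List.count_replicate, hxy.symm]
  rw [hucx, hvcx] at h1
  simp only [List.replicate_zero] at h1
  have h2 := (h1 w).mpr (by simpa using hw)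
  have := hNx _ h2
  rw [List.count_append] at this
  simp [List.count_replicate_self] at this
  omega

/-- If `L` is a nonempty commutative regular language with a product-form minimal
automaton, then at most one letter has a finite one-letter projection; consequently
the projection to any subalphabet with at least two letters is infinite, and if the
alphabet has at least two letters then `L` itself is infinite (so no nonempty finite
language over an at least binary alphabet has a product-form minimal automaton). -/
theorem stmt8 {α : Type*} [Fintype α] [DecidableEq α] (L : Set (List α))
    (hne : L.Nonempty) (hc : CommutativeLang L) (hr : RegularLang L)
    (hp : HasProductForm L) :
    (∀ x y : α,
        ((fun w : List α => w.filter (fun z => z = x)) '' L).Finite →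
        ((fun w : List α => w.filter (fun z => z = y)) '' L).Finite → x = y) ∧
    (∀ Γ : Finset α, 2 ≤ Γ.card →
        ((fun w : List α => w.filter (fun z => z ∈ Γ)) '' L).Infinite) ∧
    (2 ≤ Fintype.card α → L.Infinite) := by
  have part1 : ∀ x y : α,
      ((fun w : List α => w.filter (fun z => z = x)) '' L).Finite →
      ((fun w : List α => w.filter (fun z => z = y)) '' L).Finite → x = y := by
    intro x y hx hy
    by_contra hxy
    obtain ⟨Nx, hNx⟩ := bound_of_finite L x hx
    obtain ⟨Ny, hNy⟩ := bound_of_finite L y hy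
    exact core L hne hp x y hxy Nx Ny hNx hNy
  have part2 : ∀ Γ : Finset α, 2 ≤ Γ.card →
      ((fun w : List α => w.filter (fun z => z ∈ Γ)) '' L).Infinite := by
    intro Γ hΓ hfin
    obtain ⟨x, hxΓ, y, hyΓ, hxy⟩ := Finset.one_lt_card.mp hΓ
    obtain ⟨N, hN⟩ := (hfin.image List.length).bddAbove
    have hb : ∀ z : α, z ∈ Γ → ∀ w ∈ L, w.count z ≤ N := by
      intro z hz w hw
      have hlen : (w.filter (fun a => a ∈ Γ)).length ≤ N :=
        hN ⟨_, ⟨w, hw, rfl⟩, rfl⟩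
      have hcnt : (w.filter (fun a => a ∈ Γ)).count z = w.count z :=
        List.count_filter (by simp [hz])
      calc w.count z = (w.filter (fun a => a ∈ Γ)).count z := hcnt.symm
        _ ≤ (w.filter (fun a => a ∈ Γ)).length := List.count_le_length
        _ ≤ N := hlen
    exact core L hne hp x y hxy N N (hb x hxΓ) (hb y hyΓ)
  refine ⟨part1, part2, ?_⟩
  intro hcard hLfin
  have h2 : (2 : ℕ) ≤ (Finset.univ : Finset α).card := by simpa using hcard
  exact part2 Finset.univ h2 (hLfin.image _)
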